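/- With \zeta_r^{des}(-k_1,\dots,-k_r) defined by the Bernoulli-number formula (explicitly: the coefficient extraction from Z_r(t_1,\dots,t_r) = \prod_{i=1}^r F(t_i+\cdots+t_r) with F(u) = ((1-u)e^u-1)/(e^u-1)^2), for all k_1,\dots,k_r \in \mathbb{N}_0 one has \zeta_r^{des}(-k_1,\dots,-k_r) = \sum_{i_2+j_2=k_2, \dots, i_r+j_r=k_r} \prod_{a=2}^r \binom{k_a}{i_a} \; \zeta_{r-1}^{des}(-i_2,\dots,-i_r) \cdot \zeta_1^{des}(-k_1-j_2-\cdots-j_r). -/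

import Mathlib

/-- The multivariate power series `f(∑_{j ∈ S} t_j)` obtained by substituting the
sum of the variables indexed by `S` into the one-variable power series `f`. -/
noncomputable def substSum {r : ℕ} (f : PowerSeries ℚ) (S : Finset (Fin r)) :
    MvPowerSeries (Fin r) ℚ :=
  fun d => if d.support ⊆ S then
    (d.multinomial : ℚ) * PowerSeries.coeff (d.sum fun _ n => n) f else 0

/-- `Zgen r f = ∏_{i=1}^r f(t_i + ⋯ + t_r)` as a formal power series in `t_1, …, t_r`. -/
noncomputable def Zgen (r : ℕ) (f : PowerSeries ℚ) : MvPowerSeries (Fin r) ℚ :=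
  ∏ i : Fin r, substSum f (Finset.Ici i)

/-- View a power series in the variables `t_2, …, t_{r+1}` (i.e. in `r` variables)
as a power series in `t_1, …, t_{r+1}` not involving the first variable. -/
noncomputable def shiftVar {r : ℕ} (f : MvPowerSeries (Fin r) ℚ) :
    MvPowerSeries (Fin (r + 1)) ℚ :=
  fun d => if d 0 = 0 then
    f (Finsupp.comapDomain Fin.succ d (Fin.succ_injective r).injOn) else 0

/-- The desingularized value `ζ_r^{des}(-k_1, …, -k_r)`: namely `k_1! ⋯ k_r!` times
the coefficient of `(-t_1)^{k_1} ⋯ (-t_r)^{k_r}` in `Zgen r f`. -/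
noncomputable def zetaDes (r : ℕ) (f : PowerSeries ℚ) (k : Fin r → ℕ) : ℚ :=
  (∏ i, ((-1 : ℚ) ^ (k i) * (k i).factorial)) *
    MvPowerSeries.coeff (Finsupp.equivFunOnFinite.symm k) (Zgen r f)

open Finset Finsupp

variable {r : ℕ}

/-- tail of a finsupp on `Fin (r+1)`. -/
noncomputable def tl (d : Fin (r+1) →₀ ℕ) : Fin r →₀ ℕ :=
  Finsupp.comapDomain Fin.succ d (Fin.succ_injective r).injOn

@[simp] lemma tl_apply (d : Fin (r+1) →₀ ℕ) (a : Fin r) : tl d a = d a.succ := rfl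

lemma shiftVar_apply (f : MvPowerSeries (Fin r) ℚ) (d : Fin (r+1) →₀ ℕ) :
    shiftVar f d = if d 0 = 0 then f (tl d) else 0 := rfl

lemma tl_add (d e : Fin (r+1) →₀ ℕ) : tl (d + e) = tl d + tl e :=
  Finsupp.comapDomain_add_of_injective (Fin.succ_injective r) d e

lemma embDomain_tl (d : Fin (r+1) →₀ ℕ) (h : d 0 = 0) :
    Finsupp.embDomain (Fin.succEmb r) (tl d) = d := by
  ext x
  induction x using Fin.cases with
  | zero =>
    rw [h]
    apply Finsupp.embDomain_notin_range
    rintro ⟨a, ha⟩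
    exact (Fin.succ_ne_zero a) ha
  | succ a =>
    rw [show (a.succ : Fin (r+1)) = (Fin.succEmb r) a from rfl, Finsupp.embDomain_apply_self]
    rfl

@[simp] lemma tl_embDomain (e : Fin r →₀ ℕ) : tl (Finsupp.embDomain (Fin.succEmb r) e) = e := by
  ext a
  rw [tl_apply, show (a.succ : Fin (r+1)) = (Fin.succEmb r) a from rfl, Finsupp.embDomain_apply_self]

@[simp] lemma embDomain_apply_zero (e : Fin r →₀ ℕ) :
    Finsupp.embDomain (Fin.succEmb r) e 0 = 0 := by
  apply Finsupp.embDomain_notin_range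
  rintro ⟨a, ha⟩
  exact (Fin.succ_ne_zero a) ha

lemma shiftVar_mul (f g : MvPowerSeries (Fin r) ℚ) :
    shiftVar (f * g) = shiftVar f * shiftVar g := by
  funext d
  have hmul : (shiftVar f * shiftVar g) d =
      ∑ p ∈ Finset.HasAntidiagonal.antidiagonal d, shiftVar f p.1 * shiftVar g p.2 :=
    MvPowerSeries.coeff_mul d _ _
  rw [hmul, shiftVar_apply]
  by_cases h : d 0 = 0
  · rw [if_pos h]
    have hfg : (f * g) (tl d) = ∑ p ∈ Finset.HasAntidiagonal.antidiagonal (tl d), f p.1 * g p.2 :=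
      MvPowerSeries.coeff_mul (tl d) f g
    rw [hfg]
    refine Finset.sum_of_injOn
      (fun p => (Finsupp.embDomain (Fin.succEmb r) p.1, Finsupp.embDomain (Fin.succEmb r) p.2))
      ?_ ?_ ?_ ?_
    · intro p _ q _ hpq
      obtain ⟨h1, h2⟩ := Prod.mk.injEq .. ▸ hpq
      exact Prod.ext (Finsupp.embDomain_injective _ h1) (Finsupp.embDomain_injective _ h2)
    · intro p hp
      rw [Finset.mem_coe, Finset.HasAntidiagonal.mem_antidiagonal] at hp ⊢
      rw [← Finsupp.embDomain_add, hp, embDomain_tl d h]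
    · intro p hp hnot
      rw [Finset.HasAntidiagonal.mem_antidiagonal] at hp
      by_cases h1 : p.2 0 = 0
      · exfalso
        have h0 : p.1 0 = 0 := by
          have := DFunLike.congr_fun hp 0
          simp only [Finsupp.add_apply, h, h1] at this
          omega
        apply hnot
        refine ⟨(tl p.1, tl p.2), ?_, ?_⟩
        · rw [Finset.mem_coe, Finset.HasAntidiagonal.mem_antidiagonal, ← tl_add, hp]
        · simp only [embDomain_tl p.1 h0, embDomain_tl p.2 h1]
      · rw [shiftVar_apply g, if_neg h1, mul_zero]
    · intro p hp
      simp only [shiftVar_apply, embDomain_apply_zero, if_pos, tl_embDomain]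
  · rw [if_neg h]
    refine (Finset.sum_eq_zero fun p hp => ?_).symm
    rw [Finset.HasAntidiagonal.mem_antidiagonal] at hp
    have := DFunLike.congr_fun hp 0
    simp only [Finsupp.add_apply] at this
    by_cases h1 : p.1 0 = 0
    · rw [shiftVar_apply g, if_neg (by omega), mul_zero]
    · rw [shiftVar_apply f, if_neg h1, zero_mul]

lemma shiftVar_one : shiftVar (1 : MvPowerSeries (Fin r) ℚ) = 1 := by
  funext d
  rw [shiftVar_apply]
  have h1 : ∀ (s : ℕ) (e : Fin s →₀ ℕ), (1 : MvPowerSeries (Fin s) ℚ) e =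
      if e = 0 then 1 else 0 := fun s e => MvPowerSeries.coeff_one e
  rw [h1, h1]
  by_cases h : d 0 = 0
  · rw [if_pos h]
    by_cases h2 : d = 0
    · subst h2; simp [tl]
    · rw [if_neg h2, if_neg]
      intro h3
      apply h2
      have := embDomain_tl d h
      rw [h3] at this
      simpa using this.symm
  · rw [if_neg h, if_neg]
    intro h2
    exact h (by rw [h2]; rfl)

lemma shiftVar_prod {ι : Type*} (s : Finset ι) (g : ι → MvPowerSeries (Fin r) ℚ) :
    shiftVar (∏ i ∈ s, g i) = ∏ i ∈ s, shiftVar (g i) :=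
  map_prod (MonoidHom.mk ⟨shiftVar, shiftVar_one⟩ shiftVar_mul) g s

lemma substSum_apply (f : PowerSeries ℚ) (S : Finset (Fin r)) (d : Fin r →₀ ℕ) :
    substSum f S d = if d.support ⊆ S then
      (d.multinomial : ℚ) * PowerSeries.coeff (d.sum fun _ n => n) f else 0 := rfl

lemma support_eq_map_tl (d : Fin (r+1) →₀ ℕ) (h : d 0 = 0) :
    d.support = (tl d).support.map (Fin.succEmb r) := by
  conv_lhs => rw [← embDomain_tl d h]
  exact Finsupp.support_embDomain _ _

lemma sum_tl (d : Fin (r+1) →₀ ℕ) (h : d 0 = 0) :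
    (tl d).sum (fun _ n => n) = d.sum (fun _ n => n) := by
  rw [Finsupp.sum, Finsupp.sum, support_eq_map_tl d h, Finset.sum_map]
  rfl

lemma multinomial_tl (d : Fin (r+1) →₀ ℕ) (h : d 0 = 0) :
    (tl d).multinomial = d.multinomial := by
  rw [Finsupp.multinomial_eq, Finsupp.multinomial_eq, Nat.multinomial, Nat.multinomial,
    support_eq_map_tl d h, Finset.sum_map, Finset.prod_map]
  rfl

lemma substSum_Ici_succ (f : PowerSeries ℚ) (i : Fin r) :
    substSum f (Finset.Ici i.succ) = shiftVar (substSum f (Finset.Ici i)) := by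
  funext d
  rw [substSum_apply, shiftVar_apply]
  by_cases h : d 0 = 0
  · rw [if_pos h, substSum_apply]
    have hsupp : d.support ⊆ Finset.Ici i.succ ↔ (tl d).support ⊆ Finset.Ici i := by
      rw [support_eq_map_tl d h]
      constructor
      · intro hs a ha
        have := hs (Finset.mem_map_of_mem _ ha)
        rw [Finset.mem_Ici] at this ⊢
        exact Fin.succ_le_succ_iff.mp this
      · intro hs x hx
        rw [Finset.mem_map] at hx
        obtain ⟨a, ha, rfl⟩ := hx
        rw [Finset.mem_Ici]
        exact Fin.succ_le_succ_iff.mpr (Finset.mem_Ici.mp (hs ha))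
    by_cases hs : d.support ⊆ Finset.Ici i.succ
    · rw [if_pos hs, if_pos (hsupp.mp hs), multinomial_tl d h, sum_tl d h]
    · rw [if_neg hs, if_neg (fun hc => hs (hsupp.mpr hc))]
  · rw [if_neg h, if_neg]
    intro hs
    have h0 : (0 : Fin (r+1)) ∈ d.support := Finsupp.mem_support_iff.mpr h
    have := Finset.mem_Ici.mp (hs h0)
    exact absurd (le_antisymm (Fin.le_def.mpr (by simp)) this).symm (Fin.succ_ne_zero i)

lemma Ici_zero_eq_univ : Finset.Ici (0 : Fin (r+1)) = Finset.univ := by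
  ext x; simp [Fin.zero_le]

lemma Zgen_succ (f : PowerSeries ℚ) :
    Zgen (r+1) f = substSum f Finset.univ * shiftVar (Zgen r f) := by
  rw [Zgen, Fin.prod_univ_succ, Ici_zero_eq_univ]
  congr 1
  rw [Zgen, shiftVar_prod]
  exact Finset.prod_congr rfl fun i _ => substSum_Ici_succ f i

lemma finsupp_sum_eq {s : ℕ} (d : Fin s →₀ ℕ) : (d.sum fun _ n => n) = ∑ x, d x :=
  Finsupp.sum_fintype d _ (fun _ => rfl)

lemma multinomial_cast_fact {s : ℕ} (d : Fin s →₀ ℕ) :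
    (d.multinomial : ℚ) * ∏ x, ((d x).factorial : ℚ) = ((∑ x, d x).factorial : ℚ) := by
  have h := Nat.multinomial_spec d.support d
  have hsum : ∑ x ∈ d.support, d x = ∑ x, d x :=
    Finset.sum_subset (Finset.subset_univ _)
      (fun x _ hx => Finsupp.notMem_support_iff.mp hx)
  have hprod : ∏ x ∈ d.support, (d x).factorial = ∏ x, (d x).factorial :=
    Finset.prod_subset (Finset.subset_univ _)
      (fun x _ hx => by rw [Finsupp.notMem_support_iff.mp hx]; rfl)
  rw [hsum, hprod] at h
  rw [Finsupp.multinomial_eq]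
  push_cast [← h]
  ring

lemma zetaDes_one (f : PowerSeries ℚ) (n : ℕ) :
    zetaDes 1 f (fun _ => n) = (-1 : ℚ) ^ n * n.factorial * PowerSeries.coeff n f := by
  rw [zetaDes, Fin.prod_univ_one]
  have hZ : Zgen 1 f = substSum f Finset.univ := by
    rw [Zgen, Fin.prod_univ_one, Ici_zero_eq_univ]
  rw [hZ, MvPowerSeries.coeff_apply, substSum_apply, if_pos (Finset.subset_univ _)]
  set d : Fin 1 →₀ ℕ := Finsupp.equivFunOnFinite.symm (fun _ => n) with hd
  have hds : d = Finsupp.single 0 n := by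
    refine Finsupp.ext fun x => ?_
    rw [Fin.eq_zero x]
    simp [hd]
  have hsum : (d.sum fun _ m => m) = n := by
    rw [hds, Finsupp.sum_single_index]; rfl
  have hmult : (d.multinomial : ℚ) = 1 := by
    rw [hds]
    by_cases hn : n = 0
    · subst hn
      norm_cast
      rw [Finsupp.single_zero, Finsupp.multinomial_eq]
      simp
    · norm_cast
      rw [Finsupp.multinomial_eq, Finsupp.support_single_ne_zero _ hn]
      simp
  rw [hsum, hmult]
  ring

lemma scalar_key (kk : Fin (r + 1) → ℕ) (i j : Fin r → ℕ)
    (hij : ∀ a, i a + j a = kk a.succ) (M : ℚ)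
    (hM : M * (((kk 0).factorial : ℚ) * ∏ a : Fin r, ((j a).factorial : ℚ)) =
      ((kk 0 + ∑ a : Fin r, j a).factorial : ℚ)) :
    (∏ a : Fin r, ((kk a.succ).choose (i a) : ℚ)) *
      (∏ a : Fin r, ((-1 : ℚ) ^ (i a) * ((i a).factorial : ℚ))) *
      ((-1 : ℚ) ^ (kk 0 + ∑ a : Fin r, j a) * ((kk 0 + ∑ a : Fin r, j a).factorial : ℚ)) =
    (∏ x, ((-1 : ℚ) ^ (kk x) * ((kk x).factorial : ℚ))) * M := by
  have h1 : ∀ a : Fin r, ((kk a.succ).choose (i a) : ℚ) * (i a).factorial * (j a).factorial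
      = (kk a.succ).factorial := by
    intro a
    have h0 := hij a
    have h := Nat.choose_mul_factorial_mul_factorial (show i a ≤ kk a.succ by omega)
    have hj : kk a.succ - i a = j a := by omega
    rw [hj] at h
    exact_mod_cast congrArg (fun m : ℕ => (m : ℚ)) h
  have h2 : (∏ a : Fin r, ((kk a.succ).choose (i a) : ℚ)) * (∏ a : Fin r, ((i a).factorial : ℚ)) *
      (∏ a : Fin r, ((j a).factorial : ℚ)) = ∏ a : Fin r, ((kk a.succ).factorial : ℚ) := by
    rw [← Finset.prod_mul_distrib, ← Finset.prod_mul_distrib]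
    exact Finset.prod_congr rfl fun a _ => h1 a
  have hsum : ∑ a : Fin r, i a + ∑ a : Fin r, j a = ∑ a : Fin r, kk a.succ := by
    rw [← Finset.sum_add_distrib]
    exact Finset.sum_congr rfl fun a _ => hij a
  have hsign : ((-1 : ℚ)) ^ (∑ a : Fin r, i a) * (-1) ^ (kk 0 + ∑ a : Fin r, j a) =
      (-1) ^ (kk 0) * (-1) ^ (∑ a : Fin r, kk a.succ) := by
    rw [← pow_add, ← pow_add]
    congr 1
    omega
  have hsplit1 : ∏ a : Fin r, ((-1 : ℚ) ^ (i a) * ((i a).factorial : ℚ)) =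
      (-1 : ℚ) ^ (∑ a : Fin r, i a) * ∏ a : Fin r, ((i a).factorial : ℚ) := by
    rw [Finset.prod_mul_distrib, Finset.prod_pow_eq_pow_sum]
  have hsplit2 : ∏ x : Fin (r + 1), ((-1 : ℚ) ^ (kk x) * ((kk x).factorial : ℚ)) =
      ((-1 : ℚ) ^ (kk 0) * (-1 : ℚ) ^ (∑ a : Fin r, kk a.succ)) *
        (((kk 0).factorial : ℚ) * ∏ a : Fin r, ((kk a.succ).factorial : ℚ)) := by
    rw [Fin.prod_univ_succ, Finset.prod_mul_distrib, Finset.prod_pow_eq_pow_sum]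
    ring
  rw [hsplit1, hsplit2]
  linear_combination
    (-((∏ a : Fin r, ((kk a.succ).choose (i a) : ℚ)) * (∏ a : Fin r, ((i a).factorial : ℚ)) *
      ((-1 : ℚ) ^ (∑ a : Fin r, i a)) * ((-1 : ℚ) ^ (kk 0 + ∑ a : Fin r, j a)))) * hM
    + (((-1 : ℚ) ^ (∑ a : Fin r, i a)) * ((-1 : ℚ) ^ (kk 0 + ∑ a : Fin r, j a)) * M * ((kk 0).factorial : ℚ)) * h2
    + (M * ((kk 0).factorial : ℚ) * (∏ a : Fin r, ((kk a.succ).factorial : ℚ))) * hsign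

noncomputable def Pm (k : Fin (r+1) → ℕ) (m : Fin r → ℕ × ℕ) : Fin (r+1) →₀ ℕ :=
  Finsupp.equivFunOnFinite.symm (Fin.cases (k 0) (fun a => (m a).2))

noncomputable def Qm (m : Fin r → ℕ × ℕ) : Fin (r+1) →₀ ℕ :=
  Finsupp.equivFunOnFinite.symm (Fin.cases 0 (fun a => (m a).1))

@[simp] lemma Pm_zero (k : Fin (r+1) → ℕ) (m : Fin r → ℕ × ℕ) : Pm k m 0 = k 0 := by
  simp [Pm]

@[simp] lemma Pm_succ (k : Fin (r+1) → ℕ) (m : Fin r → ℕ × ℕ) (a : Fin r) :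
    Pm k m a.succ = (m a).2 := by
  simp [Pm]

@[simp] lemma Qm_zero (m : Fin r → ℕ × ℕ) : Qm m 0 = 0 := by
  simp [Qm]

@[simp] lemma Qm_succ (m : Fin r → ℕ × ℕ) (a : Fin r) : Qm m a.succ = (m a).1 := by
  simp [Qm]

/-- Recurrence for desingularized values: for `k_1, …, k_r ∈ ℕ₀`,
`ζ_r^{des}(-k_1,…,-k_r) = ∑_{i_a+j_a=k_a (a=2..r)} ∏_{a=2}^r C(k_a, i_a)
ζ_{r-1}^{des}(-i_2,…,-i_r) ζ_1^{des}(-k_1-j_2-⋯-j_r)`.  Stated for depth `r + 1`. -/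
theorem zetaDes_recurrence (F : PowerSeries ℚ)
    (hF : (PowerSeries.exp ℚ - 1) ^ 2 * F =
      (1 - PowerSeries.X) * PowerSeries.exp ℚ - 1) (r : ℕ) (k : Fin (r + 1) → ℕ) :
    zetaDes (r + 1) F k =
      ∑ m ∈ Fintype.piFinset fun a : Fin r => Finset.HasAntidiagonal.antidiagonal (k a.succ),
        (∏ a : Fin r, ((k a.succ).choose (m a).1 : ℚ)) *
          zetaDes r F (fun a => (m a).1) *
          zetaDes 1 F (fun _ => k 0 + ∑ a : Fin r, (m a).2) := by
  classical
  set K : Fin (r+1) →₀ ℕ := Finsupp.equivFunOnFinite.symm k with hKdef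
  rw [zetaDes, Zgen_succ, MvPowerSeries.coeff_mul, Finset.mul_sum]
  have hKa : ∀ x, K x = k x := fun x => rfl
  refine (Finset.sum_of_injOn (fun m => (Pm k m, Qm m)) ?_ ?_ ?_ ?_).symm
  · -- injective
    intro m hm m' hm' h
    simp only [Prod.mk.injEq] at h
    funext a
    have h1 := DFunLike.congr_fun h.1 a.succ
    have h2 := DFunLike.congr_fun h.2 a.succ
    simp only [Pm_succ, Qm_succ] at h1 h2
    exact Prod.ext h2 h1
  · -- maps to
    intro m hm
    rw [Finset.mem_coe, Fintype.mem_piFinset] at hm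
    simp only [Finset.mem_coe, Finset.HasAntidiagonal.mem_antidiagonal]
    refine Finsupp.ext fun x => ?_
    induction x using Fin.cases with
    | zero => simp [hKa]
    | succ a =>
      have := Finset.HasAntidiagonal.mem_antidiagonal.mp (hm a)
      simp only [Finsupp.add_apply, Pm_succ, Qm_succ, hKa, Finsupp.coe_equivFunOnFinite_symm]
      omega
  · -- vanishing off the image
    intro p hp hnot
    rw [Finset.HasAntidiagonal.mem_antidiagonal] at hp
    by_cases hq : p.2 0 = 0
    · exfalso
      apply hnot
      refine ⟨fun a => (p.2 a.succ, p.1 a.succ), ?_, ?_⟩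
      · rw [Finset.mem_coe, Fintype.mem_piFinset]
        intro a
        rw [Finset.HasAntidiagonal.mem_antidiagonal]
        have := DFunLike.congr_fun hp a.succ
        simp only [Finsupp.add_apply, Finsupp.coe_equivFunOnFinite_symm] at this
        omega
      · have hp0 : p.1 0 = k 0 := by
          have := DFunLike.congr_fun hp 0
          simp only [Finsupp.add_apply, Finsupp.coe_equivFunOnFinite_symm, hq] at this
          omega
        have e1 : Pm k (fun a => (p.2 a.succ, p.1 a.succ)) = p.1 := by
          refine Finsupp.ext fun x => ?_
          induction x using Fin.cases with
          | zero => simp [hp0]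
          | succ a => simp
        have e2 : Qm (fun a => (p.2 a.succ, p.1 a.succ)) = p.2 := by
          refine Finsupp.ext fun x => ?_
          induction x using Fin.cases with
          | zero => simp [hq]
          | succ a => simp
        exact Prod.ext e1 e2
    · simp only [MvPowerSeries.coeff_apply, shiftVar_apply, if_neg hq, mul_zero]
  · -- values agree
    intro m hm
    rw [Fintype.mem_piFinset] at hm
    have hm' : ∀ a, (m a).1 + (m a).2 = k a.succ :=
      fun a => Finset.HasAntidiagonal.mem_antidiagonal.mp (hm a)
    set n := k 0 + ∑ a : Fin r, (m a).2 with hn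
    rw [zetaDes_one, zetaDes]
    -- compute the two coefficient factors
    have hsub : MvPowerSeries.coeff (Pm k m) (substSum F Finset.univ) =
        ((Pm k m).multinomial : ℚ) * PowerSeries.coeff n F := by
      rw [MvPowerSeries.coeff_apply, substSum_apply, if_pos (Finset.subset_univ _)]
      congr 2
      rw [finsupp_sum_eq, Fin.sum_univ_succ]
      simp [hn]
    have hshift : MvPowerSeries.coeff (Qm m) (shiftVar (Zgen r F)) =
        Zgen r F (Finsupp.equivFunOnFinite.symm fun a => (m a).1) := by
      rw [MvPowerSeries.coeff_apply, shiftVar_apply, if_pos (Qm_zero m)]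
      congr 1
      refine Finsupp.ext fun a => ?_
      simp
    rw [hsub, hshift]
    have hM := multinomial_cast_fact (Pm k m)
    rw [Fin.sum_univ_succ, Fin.prod_univ_succ] at hM
    simp only [Pm_zero, Pm_succ] at hM
    push_cast at hM
    have hMQ : ((Pm k m).multinomial : ℚ) *
        (((k 0).factorial : ℚ) * ∏ a : Fin r, (((m a).2).factorial : ℚ)) =
        ((k 0 + ∑ a : Fin r, (m a).2).factorial : ℚ) := by
      push_cast
      linear_combination hM
    have hs := scalar_key k (fun a => (m a).1) (fun a => (m a).2) hm'
      ((Pm k m).multinomial : ℚ) hMQ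
    rw [MvPowerSeries.coeff_apply]
    push_cast at hs ⊢
    linear_combination ((Zgen r F) (Finsupp.equivFunOnFinite.symm fun a => (m a).1) *
      PowerSeries.coeff n F) * hs
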